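/- With G, C1, C2, α_1, α_2 as in the context (in particular G has no universal vertex), if α_1 + α_2 ≥ 4, then G has a 3-tuple dominating set and γ×3(G) = 4. -/

import Mathlib

open Set

/-- The closed neighborhood `N[v]` of a vertex `v`: `v` together with its neighbors. -/
def closedNbhd {V : Type*} (G : SimpleGraph V) (v : V) : Set V :=
  insert v {w | G.Adj v w}

/-- `D` is a `k`-tuple dominating set of `G`: every vertex has at least `k` members of `D`
in its closed neighborhood. -/
def IsKTupleDomSet {V : Type*} (G : SimpleGraph V) (k : ℕ) (D : Set V) : Prop :=
  ∀ v : V, k ≤ (closedNbhd G v ∩ D).ncard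

/-- `γ×k(G)`: the minimum cardinality of a `k`-tuple dominating set of `G`. -/
noncomputable def gammaTuple {V : Type*} (G : SimpleGraph V) (k : ℕ) : ℕ :=
  sInf {n | ∃ D : Set V, IsKTupleDomSet G k D ∧ D.ncard = n}

/-- A vertex is universal if its closed neighborhood is the whole vertex set. -/
def IsUniversalVertex {V : Type*} (G : SimpleGraph V) (u : V) : Prop :=
  closedNbhd G u = Set.univ

/-- The non-neighbor set `N̄(v) = V \ N[v]`. -/
def nonNbhd {V : Type*} (G : SimpleGraph V) (v : V) : Set V :=
  (closedNbhd G v)ᶜ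

/-- `S` is a stable set of the auxiliary interval graph `H_i`: the non-neighbor sets of the
vertices of `S` are pairwise disjoint. -/
def IsC0PStable {V : Type*} (G : SimpleGraph V) (S : Set V) : Prop :=
  S.Pairwise fun u w => Disjoint (nonNbhd G u) (nonNbhd G w)

section
variable {V : Type*} {G : SimpleGraph V}

lemma mem_closedNbhd_comm {u v : V} : u ∈ closedNbhd G v ↔ v ∈ closedNbhd G u := by
  simp only [closedNbhd, Set.mem_insert_iff, Set.mem_setOf_eq]
  constructor
  · rintro (h | h)
    · exact Or.inl h.symm
    · exact Or.inr h.symm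
  · rintro (h | h)
    · exact Or.inl h.symm
    · exact Or.inr h.symm

lemma clique_mem_closedNbhd {C : Set V} (hC : G.IsClique C) {u v : V}
    (hu : u ∈ C) (hv : v ∈ C) : u ∈ closedNbhd G v := by
  by_cases h : u = v
  · exact Set.mem_insert_iff.mpr (Or.inl h)
  · exact Set.mem_insert_iff.mpr (Or.inr (hC hv hu (fun he => h he.symm)))

lemma one_of_mem {a b : V} (hab : Disjoint (nonNbhd G a) (nonNbhd G b)) (v : V) :
    a ∈ closedNbhd G v ∨ b ∈ closedNbhd G v := by
  by_contra hcon
  push_neg at hcon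
  have h1 : v ∈ nonNbhd G a := by
    simp only [nonNbhd, Set.mem_compl_iff]
    exact fun h => hcon.1 (mem_closedNbhd_comm.mp h)
  have h2 : v ∈ nonNbhd G b := by
    simp only [nonNbhd, Set.mem_compl_iff]
    exact fun h => hcon.2 (mem_closedNbhd_comm.mp h)
  exact Set.disjoint_left.mp hab h1 h2

lemma exists_two {S : Set V} [Fintype V] (h : 2 ≤ S.ncard) :
    ∃ a b, a ∈ S ∧ b ∈ S ∧ a ≠ b := by
  have := Set.one_lt_ncard_iff (S.toFinite) |>.mp (by omega)
  obtain ⟨a, b, ha, hb, hab⟩ := this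
  exact ⟨a, b, ha, hb, hab⟩

lemma exists_three {S : Set V} [Fintype V] (h : 3 ≤ S.ncard) :
    ∃ a b c, a ∈ S ∧ b ∈ S ∧ c ∈ S ∧ a ≠ b ∧ a ≠ c ∧ b ≠ c := by
  have h0 : S.Nonempty := Set.nonempty_of_ncard_ne_zero (by omega)
  obtain ⟨a, ha⟩ := h0
  have hd : (S \ {a}).ncard = S.ncard - 1 := Set.ncard_diff_singleton_of_mem ha
  obtain ⟨b, c, hb, hc, hbc⟩ := exists_two (S := S \ {a}) (by omega)
  exact ⟨a, b, c, ha, hb.1, hc.1, fun e => hb.2 e.symm, fun e => hc.2 e.symm, hbc⟩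

lemma three_le_ncard_of_mem {T : Set V} [Fintype V] {x y z : V}
    (hx : x ∈ T) (hy : y ∈ T) (hz : z ∈ T) (hxy : x ≠ y) (hxz : x ≠ z) (hyz : y ≠ z) :
    3 ≤ T.ncard := by
  have h3 : ({x, y, z} : Set V).ncard = 3 := by
    rw [Set.ncard_eq_three]; exact ⟨x, y, z, hxy, hxz, hyz, rfl⟩
  calc (3:ℕ) = ({x,y,z} : Set V).ncard := h3.symm
    _ ≤ T.ncard := Set.ncard_le_ncard (by
        intro w hw
        rcases hw with h | h | h
        · exact h ▸ hx
        · exact h ▸ hy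
        · exact h ▸ hz) T.toFinite

lemma caseB [Fintype V] {A B : Set V} (hd : Disjoint A B) (hun : A ∪ B = Set.univ)
    (hclA : G.IsClique A) (hclB : G.IsClique B)
    {u1 u2 u3 : V} (h1 : u1 ∈ A) (h2 : u2 ∈ A) (h3 : u3 ∈ A)
    (h12 : u1 ≠ u2) (h13 : u1 ≠ u3) (h23 : u2 ≠ u3)
    (d12 : Disjoint (nonNbhd G u1) (nonNbhd G u2))
    (d13 : Disjoint (nonNbhd G u1) (nonNbhd G u3))
    (d23 : Disjoint (nonNbhd G u2) (nonNbhd G u3))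
    {v0 : V} (hv0 : v0 ∈ B) :
    IsKTupleDomSet G 3 {u1, u2, u3, v0} ∧ ({u1, u2, u3, v0} : Set V).ncard = 4 := by
  have h1v : u1 ≠ v0 := fun e => Set.disjoint_left.mp hd h1 (e ▸ hv0)
  have h2v : u2 ≠ v0 := fun e => Set.disjoint_left.mp hd h2 (e ▸ hv0)
  have h3v : u3 ≠ v0 := fun e => Set.disjoint_left.mp hd h3 (e ▸ hv0)
  constructor
  · intro v
    have hv : v ∈ A ∨ v ∈ B := by
      have : v ∈ A ∪ B := hun ▸ Set.mem_univ v
      exact this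
    rcases hv with hvA | hvB
    · exact three_le_ncard_of_mem
        ⟨clique_mem_closedNbhd hclA h1 hvA, by simp⟩
        ⟨clique_mem_closedNbhd hclA h2 hvA, by simp⟩
        ⟨clique_mem_closedNbhd hclA h3 hvA, by simp⟩ h12 h13 h23
    · have hvv0 : v0 ∈ closedNbhd G v := clique_mem_closedNbhd hclB hv0 hvB
      rcases one_of_mem d12 v with hu | hu
      · rcases one_of_mem d23 v with hw | hw
        · exact three_le_ncard_of_mem ⟨hu, by simp⟩ ⟨hw, by simp⟩ ⟨hvv0, by simp⟩ h12 h1v h2v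
        · exact three_le_ncard_of_mem ⟨hu, by simp⟩ ⟨hw, by simp⟩ ⟨hvv0, by simp⟩ h13 h1v h3v
      · rcases one_of_mem d13 v with hw | hw
        · exact three_le_ncard_of_mem ⟨hw, by simp⟩ ⟨hu, by simp⟩ ⟨hvv0, by simp⟩ h12 h1v h2v
        · exact three_le_ncard_of_mem ⟨hu, by simp⟩ ⟨hw, by simp⟩ ⟨hvv0, by simp⟩ h23 h2v h3v
  · rw [Set.ncard_insert_of_notMem (by simp [h12, h13, h1v]),
      Set.ncard_insert_of_notMem (by simp [h23, h2v]),
      Set.ncard_insert_of_notMem (by simp [h3v]), Set.ncard_singleton]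

lemma caseA [Fintype V] {A B : Set V} (hd : Disjoint A B) (hun : A ∪ B = Set.univ)
    (hclA : G.IsClique A) (hclB : G.IsClique B)
    {u1 u2 : V} (h1 : u1 ∈ A) (h2 : u2 ∈ A) (h12 : u1 ≠ u2)
    {w1 w2 : V} (g1 : w1 ∈ B) (g2 : w2 ∈ B) (g12 : w1 ≠ w2)
    (du : Disjoint (nonNbhd G u1) (nonNbhd G u2))
    (dw : Disjoint (nonNbhd G w1) (nonNbhd G w2)) :
    IsKTupleDomSet G 3 {u1, u2, w1, w2} ∧ ({u1, u2, w1, w2} : Set V).ncard = 4 := by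
  have h1w1 : u1 ≠ w1 := fun e => Set.disjoint_left.mp hd h1 (e ▸ g1)
  have h1w2 : u1 ≠ w2 := fun e => Set.disjoint_left.mp hd h1 (e ▸ g2)
  have h2w1 : u2 ≠ w1 := fun e => Set.disjoint_left.mp hd h2 (e ▸ g1)
  have h2w2 : u2 ≠ w2 := fun e => Set.disjoint_left.mp hd h2 (e ▸ g2)
  constructor
  · intro v
    have hv : v ∈ A ∨ v ∈ B := by
      have : v ∈ A ∪ B := hun ▸ Set.mem_univ v
      exact this
    rcases hv with hvA | hvB
    · rcases one_of_mem dw v with hw | hw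
      · exact three_le_ncard_of_mem
          ⟨clique_mem_closedNbhd hclA h1 hvA, by simp⟩
          ⟨clique_mem_closedNbhd hclA h2 hvA, by simp⟩
          ⟨hw, by simp⟩ h12 h1w1 h2w1
      · exact three_le_ncard_of_mem
          ⟨clique_mem_closedNbhd hclA h1 hvA, by simp⟩
          ⟨clique_mem_closedNbhd hclA h2 hvA, by simp⟩
          ⟨hw, by simp⟩ h12 h1w2 h2w2
    · rcases one_of_mem du v with hu | hu
      · exact three_le_ncard_of_mem
          ⟨hu, by simp⟩
          ⟨clique_mem_closedNbhd hclB g1 hvB, by simp⟩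
          ⟨clique_mem_closedNbhd hclB g2 hvB, by simp⟩ h1w1 h1w2 g12
      · exact three_le_ncard_of_mem
          ⟨hu, by simp⟩
          ⟨clique_mem_closedNbhd hclB g1 hvB, by simp⟩
          ⟨clique_mem_closedNbhd hclB g2 hvB, by simp⟩ h2w1 h2w2 g12
  · rw [Set.ncard_insert_of_notMem (by simp [h12, h1w1, h1w2]),
      Set.ncard_insert_of_notMem (by simp [h2w1, h2w2]),
      Set.ncard_insert_of_notMem (by simp [g12]), Set.ncard_singleton]

lemma lower_bound [Fintype V] (hnouniv : ∀ v : V, ¬ IsUniversalVertex G v) (v0 : V)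
    {D : Set V} (hD : IsKTupleDomSet G 3 D) : 4 ≤ D.ncard := by
  have hle : ∀ v : V, (closedNbhd G v ∩ D).ncard ≤ D.ncard :=
    fun v => Set.ncard_le_ncard Set.inter_subset_right D.toFinite
  have h3 : 3 ≤ D.ncard := le_trans (hD v0) (hle v0)
  by_contra hcon
  have hD3 : D.ncard = 3 := by omega
  have hsub : ∀ v : V, D ⊆ closedNbhd G v := by
    intro v
    have heq : closedNbhd G v ∩ D = D :=
      Set.eq_of_subset_of_ncard_le Set.inter_subset_right
        (by rw [hD3]; exact hD v) D.toFinite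
    rw [← heq]; exact Set.inter_subset_left
  obtain ⟨d, hd⟩ : D.Nonempty := Set.nonempty_of_ncard_ne_zero (by omega)
  refine hnouniv d ?_
  rw [IsUniversalVertex, Set.eq_univ_iff_forall]
  intro v
  exact mem_closedNbhd_comm.mp (hsub v hd)
end


/-- in a C0P-graph with no universal vertices, if `α1 + α2 ≥ 4` then `G` has a `3`-tuple dominating set and `γ×3(G) = 4`. -/
theorem stmt13 {V : Type*} [Fintype V] [LinearOrder V] (G : SimpleGraph V) (C1 C2 : Set V)
    (hd12 : Disjoint C1 C2) (hunion : C1 ∪ C2 = Set.univ)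
    (hne1 : C1.Nonempty) (hne2 : C2.Nonempty)
    (hcl1 : G.IsClique C1) (hcl2 : G.IsClique C2)
    (hnouniv : ∀ v : V, ¬ IsUniversalVertex G v)
    (hint1 : ∀ v ∈ C1, (nonNbhd G v).Nonempty ∧
      ∀ a ∈ C2, ∀ b ∈ C2, ∀ c ∈ C2, a ≤ b → b ≤ c →
        a ∈ nonNbhd G v → c ∈ nonNbhd G v → b ∈ nonNbhd G v)
    (hint2 : ∀ v ∈ C2, (nonNbhd G v).Nonempty ∧
      ∀ a ∈ C1, ∀ b ∈ C1, ∀ c ∈ C1, a ≤ b → b ≤ c →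
        a ∈ nonNbhd G v → c ∈ nonNbhd G v → b ∈ nonNbhd G v)
    (α1 α2 : ℕ)
    (hα1 : IsGreatest {n | ∃ S : Set V, S ⊆ C1 ∧ IsC0PStable G S ∧ S.ncard = n} α1)
    (hα2 : IsGreatest {n | ∃ S : Set V, S ⊆ C2 ∧ IsC0PStable G S ∧ S.ncard = n} α2)
    (h : 4 ≤ α1 + α2) :
    (∃ D : Set V, IsKTupleDomSet G 3 D) ∧ gammaTuple G 3 = 4 := by
  obtain ⟨S1, hS1sub, hS1st, hS1card⟩ := hα1.1
  obtain ⟨S2, hS2sub, hS2st, hS2card⟩ := hα2.1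
  have key : ∃ D : Set V, IsKTupleDomSet G 3 D ∧ D.ncard = 4 := by
    by_cases h3a : 3 ≤ α1
    · obtain ⟨a, b, c, ha, hb, hc, hab, hac, hbc⟩ :=
        exists_three (S := S1) (by rw [hS1card]; exact h3a)
      obtain ⟨v0, hv0⟩ := hne2
      exact ⟨_, caseB hd12 hunion hcl1 hcl2 (hS1sub ha) (hS1sub hb) (hS1sub hc)
        hab hac hbc (hS1st ha hb hab) (hS1st ha hc hac) (hS1st hb hc hbc) hv0⟩
    · by_cases h3b : 3 ≤ α2
      · obtain ⟨a, b, c, ha, hb, hc, hab, hac, hbc⟩ :=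
          exists_three (S := S2) (by rw [hS2card]; exact h3b)
        obtain ⟨v0, hv0⟩ := hne1
        exact ⟨_, caseB hd12.symm (by rw [Set.union_comm]; exact hunion) hcl2 hcl1
          (hS2sub ha) (hS2sub hb) (hS2sub hc)
          hab hac hbc (hS2st ha hb hab) (hS2st ha hc hac) (hS2st hb hc hbc) hv0⟩
      · obtain ⟨a, b, ha, hb, hab⟩ := exists_two (S := S1) (by rw [hS1card]; omega)
        obtain ⟨x, y, hx, hy, hxy⟩ := exists_two (S := S2) (by rw [hS2card]; omega)
        exact ⟨_, caseA hd12 hunion hcl1 hcl2 (hS1sub ha) (hS1sub hb) hab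
          (hS2sub hx) (hS2sub hy) hxy (hS1st ha hb hab) (hS2st hx hy hxy)⟩
  obtain ⟨D, hdom, hcard⟩ := key
  refine ⟨⟨D, hdom⟩, ?_⟩
  have hmem : 4 ∈ {n | ∃ D : Set V, IsKTupleDomSet G 3 D ∧ D.ncard = n} := ⟨D, hdom, hcard⟩
  refine le_antisymm (Nat.sInf_le hmem) (le_csInf ⟨4, hmem⟩ ?_)
  rintro n ⟨D', hD', rfl⟩
  exact lower_bound hnouniv hne1.choose hD'
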